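/- Let 𝓑 be a directed family with U ∈ 𝓑, and 𝓢, 𝓣 two ⊴-minimal representatives of a constructible set X with |𝓢| = |𝓣| = N > 0. Then for every B ∈ Lev_0(𝓢) there exists C ∈ Lev_0(𝓣) with B ⊆ C or C ⊆ B. -/

import Mathlib

variable {U : Type*}

/-- A directed family: nonempty sets, any two nested or disjoint. -/
def DirFam (𝓑 : Set (Set U)) : Prop :=
  (∀ B ∈ 𝓑, B.Nonempty) ∧
    ∀ B₀ ∈ 𝓑, ∀ B₁ ∈ 𝓑, B₀ ⊆ B₁ ∨ B₁ ⊆ B₀ ∨ B₀ ∩ B₁ = ∅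

/-- Constructible sets: finite boolean combinations of balls. -/
inductive Constr (𝓑 : Set (Set U)) : Set U → Prop
  | ball {B : Set U} : B ∈ 𝓑 → Constr 𝓑 B
  | compl {X : Set U} : Constr 𝓑 X → Constr 𝓑 Xᶜ
  | union {X Y : Set U} : Constr 𝓑 X → Constr 𝓑 Y → Constr 𝓑 (X ∪ Y)

/-- Levels of a (finite) subset of a partial order: Lev 0 is the set of maximal
elements, and Lev (n+1) is Lev n of the set with its maximal elements removed. -/
def Lev {α : Type*} [PartialOrder α] : ℕ → Set α → Set α
  | 0, S => {a | a ∈ S ∧ ∀ b ∈ S, a ≤ b → a = b}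
  | n + 1, S => Lev n (S \ {a | a ∈ S ∧ ∀ b ∈ S, a ≤ b → a = b})

/-- The swiss cheese operator: the union, over balls B on even levels of 𝓢, of
B minus the union of its immediate predecessors (the next-level balls inside B). -/
def Ch (𝓢 : Set (Set U)) : Set U :=
  ⋃ n : ℕ, ⋃ B ∈ Lev (2 * n) 𝓢, B \ ⋃₀ {C | C ∈ Lev (2 * n + 1) 𝓢 ∧ C ⊆ B}

/-- A finite forest: the elements above any given element form a chain. -/
def FinForest {α : Type*} [PartialOrder α] (S : Set α) : Prop :=
  ∀ a ∈ S, IsChain (· ≤ ·) {b | b ∈ S ∧ a ≤ b}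

/-- The quasi-order ⊴ on finite forests: first by cardinality, then by top-heaviness
of the level sizes. -/
def ForestQO {α β : Type*} [PartialOrder α] [PartialOrder β] (S : Set α) (T : Set β) :
    Prop :=
  S.ncard < T.ncard ∨
    (S.ncard = T.ncard ∧
      ((∀ n, (Lev n S).ncard = (Lev n T).ncard) ∨
        ∃ n, (∀ i < n, (Lev i S).ncard = (Lev i T).ncard) ∧
          (Lev n T).ncard < (Lev n S).ncard))

section Aux
variable {α : Type*} [PartialOrder α]

lemma lev_subset : ∀ (n : ℕ) (S : Set α), Lev n S ⊆ S
  | 0, S => fun _ ha => ha.1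
  | n+1, S => fun a ha => ((lev_subset n _) ha).1

lemma max_union {A B : Set α} (h : ∀ a ∈ A, ∀ b ∈ B, ¬ a ≤ b ∧ ¬ b ≤ a) :
    {x | x ∈ A ∪ B ∧ ∀ c ∈ A ∪ B, x ≤ c → x = c} =
    {x | x ∈ A ∧ ∀ c ∈ A, x ≤ c → x = c} ∪ {x | x ∈ B ∧ ∀ c ∈ B, x ≤ c → x = c} := by
  ext x
  constructor
  · rintro ⟨hx | hx, hmax⟩
    · exact Or.inl ⟨hx, fun c hc => hmax c (Or.inl hc)⟩
    · exact Or.inr ⟨hx, fun c hc => hmax c (Or.inr hc)⟩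
  · rintro (⟨hx, hmax⟩ | ⟨hx, hmax⟩)
    · refine ⟨Or.inl hx, ?_⟩
      rintro c (hc | hc) hle
      · exact hmax c hc hle
      · exact absurd hle (h x hx c hc).1
    · refine ⟨Or.inr hx, ?_⟩
      rintro c (hc | hc) hle
      · exact absurd hle (h c hc x hx).2
      · exact hmax c hc hle

lemma lev_union : ∀ (n : ℕ) (A B : Set α),
    (∀ a ∈ A, ∀ b ∈ B, ¬ a ≤ b ∧ ¬ b ≤ a) →
    Lev n (A ∪ B) = Lev n A ∪ Lev n B
  | 0, A, B, h => max_union h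
  | n+1, A, B, h => by
    have hAB : ∀ x, x ∈ A → x ∈ B → False := fun x hA hB => (h x hA x hB).1 le_rfl
    show Lev n ((A ∪ B) \ _) = Lev n (A \ _) ∪ Lev n (B \ _)
    rw [max_union h]
    have hset : (A ∪ B) \ ({x | x ∈ A ∧ ∀ c ∈ A, x ≤ c → x = c} ∪ {x | x ∈ B ∧ ∀ c ∈ B, x ≤ c → x = c})
        = (A \ {x | x ∈ A ∧ ∀ c ∈ A, x ≤ c → x = c}) ∪ (B \ {x | x ∈ B ∧ ∀ c ∈ B, x ≤ c → x = c}) := by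
      ext x
      simp only [Set.mem_diff, Set.mem_union, Set.mem_setOf_eq]
      constructor
      · rintro ⟨hx | hx, hn⟩
        · exact Or.inl ⟨hx, fun hm => hn (Or.inl hm)⟩
        · exact Or.inr ⟨hx, fun hm => hn (Or.inr hm)⟩
      · rintro (⟨hx, hn⟩ | ⟨hx, hn⟩)
        · exact ⟨Or.inl hx, fun hm => hm.elim hn (fun hm' => hAB x hx hm'.1)⟩
        · exact ⟨Or.inr hx, fun hm => hm.elim (fun hm' => hAB x hm'.1 hx) hn⟩
    rw [hset]
    exact lev_union n _ _ (fun a ha b hb => h a ha.1 b hb.1)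

end Aux

lemma ch_union {A B : Set (Set U)}
    (hdisjoint : ∀ a ∈ A, ∀ b ∈ B, a ∩ b = ∅)
    (hA : ∀ a ∈ A, a.Nonempty) (hB : ∀ b ∈ B, b.Nonempty) :
    Ch (A ∪ B) = Ch A ∪ Ch B := by
  have hinc : ∀ a ∈ A, ∀ b ∈ B, ¬ a ≤ b ∧ ¬ b ≤ a := by
    intro a ha b hb
    have hd := hdisjoint a ha b hb
    constructor
    · intro hle
      obtain ⟨x, hx⟩ := hA a ha
      exact Set.eq_empty_iff_forall_notMem.mp hd x ⟨hx, hle hx⟩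
    · intro hle
      obtain ⟨x, hx⟩ := hB b hb
      exact Set.eq_empty_iff_forall_notMem.mp hd x ⟨hle hx, hx⟩
  have key : ∀ n : ℕ, (⋃ B' ∈ Lev (2*n) (A ∪ B), B' \ ⋃₀ {C | C ∈ Lev (2*n+1) (A ∪ B) ∧ C ⊆ B'})
      = (⋃ B' ∈ Lev (2*n) A, B' \ ⋃₀ {C | C ∈ Lev (2*n+1) A ∧ C ⊆ B'})
      ∪ (⋃ B' ∈ Lev (2*n) B, B' \ ⋃₀ {C | C ∈ Lev (2*n+1) B ∧ C ⊆ B'}) := by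
    intro n
    rw [lev_union (2*n) A B hinc, Set.biUnion_union]
    congr 1
    · refine Set.iUnion₂_congr fun B' hB' => ?_
      have heq : {C | C ∈ Lev (2*n+1) (A ∪ B) ∧ C ⊆ B'} = {C | C ∈ Lev (2*n+1) A ∧ C ⊆ B'} := by
        ext C
        simp only [Set.mem_setOf_eq]
        rw [lev_union (2*n+1) A B hinc]
        simp only [Set.mem_union]
        constructor
        · rintro ⟨hC | hC, hsub⟩
          · exact ⟨hC, hsub⟩
          · exact absurd hsub (hinc B' (lev_subset _ A hB') C (lev_subset _ B hC)).2
        · rintro ⟨hC, hsub⟩; exact ⟨Or.inl hC, hsub⟩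
      rw [heq]
    · refine Set.iUnion₂_congr fun B' hB' => ?_
      have heq : {C | C ∈ Lev (2*n+1) (A ∪ B) ∧ C ⊆ B'} = {C | C ∈ Lev (2*n+1) B ∧ C ⊆ B'} := by
        ext C
        simp only [Set.mem_setOf_eq]
        rw [lev_union (2*n+1) A B hinc]
        simp only [Set.mem_union]
        constructor
        · rintro ⟨hC | hC, hsub⟩
          · exact absurd hsub (hinc C (lev_subset _ A hC) B' (lev_subset _ B hB')).1
          · exact ⟨hC, hsub⟩
        · rintro ⟨hC, hsub⟩; exact ⟨Or.inr hC, hsub⟩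
      rw [heq]
  unfold Ch
  rw [← Set.iUnion_union_distrib]
  exact Set.iUnion_congr key

lemma ch_subset_sUnion (S : Set (Set U)) : Ch S ⊆ ⋃₀ S := by
  intro x hx
  unfold Ch at hx
  simp only [Set.mem_iUnion] at hx
  obtain ⟨n, B', hB', hxB'⟩ := hx
  exact ⟨B', lev_subset _ S hB', hxB'.1⟩

/-- For ⊴-minimal representatives 𝓢, 𝓣 of X of the same positive size, every top-level
ball of 𝓢 is comparable with some top-level ball of 𝓣. -/
theorem stmt15 (𝓑 : Set (Set U)) (h : DirFam 𝓑) (hU : (Set.univ : Set U) ∈ 𝓑)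
    (X : Set U) (hX : Constr 𝓑 X) (𝓢 𝓣 : Set (Set U))
    (h𝓢 : 𝓢 ⊆ 𝓑) (h𝓣 : 𝓣 ⊆ 𝓑) (hfS : 𝓢.Finite) (hfT : 𝓣.Finite)
    (hS : Ch 𝓢 = X) (hT : Ch 𝓣 = X)
    (hminS : ∀ 𝓡 : Set (Set U), 𝓡 ⊆ 𝓑 → 𝓡.Finite → Ch 𝓡 = X → ForestQO 𝓢 𝓡)
    (hminT : ∀ 𝓡 : Set (Set U), 𝓡 ⊆ 𝓑 → 𝓡.Finite → Ch 𝓡 = X → ForestQO 𝓣 𝓡)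
    (N : ℕ) (hN : 0 < N) (hcS : 𝓢.ncard = N) (hcT : 𝓣.ncard = N) :
    ∀ B ∈ Lev 0 𝓢, ∃ C ∈ Lev 0 𝓣, B ⊆ C ∨ C ⊆ B := by
  intro B hB0
  by_contra hcon
  push_neg at hcon
  obtain ⟨hBS, hBmax⟩ := hB0
  -- Step 1: B is disjoint from X
  have hXB : ∀ x ∈ X, x ∉ B := by
    intro x hx hxB
    rw [← hT] at hx
    unfold Ch at hx
    simp only [Set.mem_iUnion] at hx
    obtain ⟨n, B', hB', hxB'⟩ := hx
    have hB'T : B' ∈ 𝓣 := lev_subset _ 𝓣 hB'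
    -- find a maximal element C of 𝓣 above B'
    obtain ⟨C, ⟨hCT, hB'C⟩, hCmax'⟩ :=
      Set.Finite.exists_maximalFor (id : Set U → Set U)
        {c | c ∈ 𝓣 ∧ B' ⊆ c} (hfT.subset fun c hc => hc.1) ⟨B', hB'T, subset_rfl⟩
    have hC0 : C ∈ Lev 0 𝓣 := by
      refine ⟨hCT, fun b hb hle => ?_⟩
      exact le_antisymm hle (hCmax' ⟨hb, hB'C.trans hle⟩ hle)
    obtain ⟨hnBC, hnCB⟩ := hcon C hC0
    rcases h.2 B (h𝓢 hBS) C (h𝓣 hCT) with hn | hn | hn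
    · exact hnBC hn
    · exact hnCB hn
    · exact Set.eq_empty_iff_forall_notMem.mp hn x ⟨hxB, hB'C hxB'.1⟩
  -- Step 2: split 𝓢 into the subtree of B and the rest
  set R : Set (Set U) := {C | C ∈ 𝓢 ∧ ¬ C ⊆ B} with hRdef
  set Sb : Set (Set U) := {C | C ∈ 𝓢 ∧ C ⊆ B} with hSbdef
  have hdisR : ∀ a ∈ R, ∀ b ∈ Sb, a ∩ b = ∅ := by
    rintro a ⟨haS, hnaB⟩ b ⟨hbS, hbB⟩
    rcases h.2 a (h𝓢 haS) B (h𝓢 hBS) with hn | hn | hn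
    · exact absurd hn hnaB
    · exact absurd ((hBmax a haS hn) ▸ subset_rfl) hnaB
    · ext x
      simp only [Set.mem_inter_iff, Set.mem_empty_iff_false, iff_false]
      rintro ⟨hxa, hxb⟩
      exact Set.eq_empty_iff_forall_notMem.mp hn x ⟨hxa, hbB hxb⟩
  have hsplit : 𝓢 = R ∪ Sb := by
    ext C
    constructor
    · intro hC
      by_cases hCB : C ⊆ B
      · exact Or.inr ⟨hC, hCB⟩
      · exact Or.inl ⟨hC, hCB⟩
    · rintro (hC | hC) <;> exact hC.1
  have hChsplit : Ch 𝓢 = Ch R ∪ Ch Sb := by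
    rw [hsplit]
    exact ch_union hdisR (fun a ha => h.1 a (h𝓢 ha.1)) (fun b hb => h.1 b (h𝓢 hb.1))
  -- Ch Sb ⊆ B
  have hChSb : Ch Sb ⊆ B := by
    refine (ch_subset_sUnion Sb).trans ?_
    rintro x ⟨c, hc, hxc⟩
    exact hc.2 hxc
  -- hence Ch R = X
  have hChR : Ch R = X := by
    apply Set.Subset.antisymm
    · rw [← hS, hChsplit]; exact Set.subset_union_left
    · intro x hx
      have : x ∈ Ch R ∪ Ch Sb := by rw [← hChsplit, hS]; exact hx
      rcases this with hxR | hxSb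
      · exact hxR
      · exact absurd (hChSb hxSb) (hXB x hx)
  -- minimality contradiction
  have hRsub : R ⊆ 𝓢 := fun c hc => hc.1
  have hRss : R ⊂ 𝓢 := by
    refine ⟨hRsub, fun hsup => ?_⟩
    have : B ∈ R := hsup hBS
    exact this.2 subset_rfl
  have hlt : R.ncard < 𝓢.ncard := Set.ncard_lt_ncard hRss hfS
  have hqo := hminS R (fun c hc => h𝓢 hc.1) (hfS.subset hRsub) hChR
  rcases hqo with hqo | ⟨hqo, _⟩
  · omega
  · omega
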